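/- Let d = xy = x̃ỹ with x = x̃ p for a prime p dividing x (so ỹ = yp). For the KD-classical pure projections ψ_{ms} (factorization d = xy) and ψ_{m̃s̃} (factorization d = x̃ỹ) with m̃ = m + (i)_{top} and s = s̃ + (j)_{top} related by adding one p-adic digit, one has the operator identity ∑_{digit j over Z_p} ψ_{m,s(j)} = ∑_{digit i over Z_p} ψ_{m̃(i),s̃}, where s(j) and m̃(i) range as the respective p-adic digit varies over Z_p. -/

import Mathlib

open Finset Complex
open scoped ComplexOrder

/-- ω_n = e^{2πi/n} -/
noncomputable def ww (n : ℕ) : ℂ := Complex.exp (2 * Real.pi * Complex.I / n)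

/-- |ψ_{m,s}⟩ = (1/√x) ∑_{k<x} ω_x^{sk} |a_{ky+m}⟩ in ℂ^d (standard basis coords). -/
noncomputable def psi (d x y m s : ℕ) : Fin d → ℂ :=
  fun t => (1 / Real.sqrt x) *
    ∑ k ∈ Finset.range x, ww x ^ (s * k) * (if (t : ℕ) = k * y + m then 1 else 0)

/-- Fourier basis vector |b_j⟩, coordinates in the standard basis. -/
noncomputable def bvec (d j : ℕ) : Fin d → ℂ :=
  fun i => ww d ^ ((i : ℕ) * j) / Real.sqrt d

/-- rank one projection |v⟩⟨v| as a matrix. -/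
noncomputable def proj {d : ℕ} (v : Fin d → ℂ) : Matrix (Fin d) (Fin d) ℂ :=
  fun i j => v i * (starRingEnd ℂ) (v j)

/-- KD quasiprobability Q_{ij}(ρ) = ⟨a_i|ρ|b_j⟩⟨b_j|a_i⟩ (standard/Fourier bases). -/
noncomputable def KD {d : ℕ} (ρ : Matrix (Fin d) (Fin d) ℂ) (i j : Fin d) : ℂ :=
  (∑ l, ρ i l * bvec d (j : ℕ) l) * (starRingEnd ℂ) (bvec d (j : ℕ) i)

/-- The set of KD-classical pure-state projections for the DFT pair in dimension d. -/
def pureKD (d : ℕ) : Set (Matrix (Fin d) (Fin d) ℂ) :=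
  {M | ∃ x y m s : ℕ, x * y = d ∧ m < y ∧ s < x ∧ M = proj (psi d x y m s)}

lemma ww_ne_zero (n : ℕ) : ww n ≠ 0 := Complex.exp_ne_zero _

lemma ww_mul_base (a b : ℕ) (ha : a ≠ 0) (hb : b ≠ 0) : ww (a * b) ^ a = ww b := by
  rw [ww, ww, ← Complex.exp_nat_mul]
  congr 1
  have ha' : (a:ℂ) ≠ 0 := Nat.cast_ne_zero.mpr ha
  have hb' : (b:ℂ) ≠ 0 := Nat.cast_ne_zero.mpr hb
  push_cast
  field_simp

lemma ww_one : ww 1 = 1 := by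
  simp [ww, Complex.exp_two_pi_mul_I]

lemma ww_pow_self (n : ℕ) (hn : n ≠ 0) : ww n ^ n = 1 := by
  have h := ww_mul_base n 1 hn one_ne_zero
  rw [mul_one] at h
  rw [h, ww_one]

lemma ww_zpow_mod (n : ℕ) (hn : n ≠ 0) {a b : ℤ} (h : a % n = b % n) :
    ww n ^ a = ww n ^ b := by
  obtain ⟨k, hk⟩ : (n:ℤ) ∣ (b - a) := Int.ModEq.dvd h
  have h1 : ww n ^ (n:ℤ) = 1 := by rw [zpow_natCast, ww_pow_self n hn]
  have : b = a + n * k := by omega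
  rw [this, zpow_add₀ (ww_ne_zero n), zpow_mul, h1, one_zpow, mul_one]

lemma geom_p (z : ℂ) (p : ℕ) (hz : z ^ p = 1) :
    ∑ k ∈ range p, z ^ k = if z = 1 then (p:ℂ) else 0 := by
  split_ifs with h
  · simp [h]
  · rw [geom_sum_eq h, hz]
    simp

lemma conj_ww (n : ℕ) : (starRingEnd ℂ) (ww n) = (ww n)⁻¹ := by
  rw [ww, ← Complex.exp_conj, ← Complex.exp_neg]
  congr 1
  simp [map_div₀, Complex.conj_I]
  rw [Complex.conj_ofNat]
  ring

lemma psi_apply (d x y m s : ℕ) (hd : d = x * y) (hm : m < y) (t : Fin d) :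
    psi d x y m s t =
      if (t : ℕ) % y = m then
        (1 / Real.sqrt x : ℝ) * ww x ^ (s * ((t:ℕ) / y)) else 0 := by
  have hy : 0 < y := by omega
  rw [psi]
  by_cases ht : (t:ℕ) % y = m
  · rw [if_pos ht, Complex.ofReal_div, Complex.ofReal_one]
    congr 1
    rw [Finset.sum_eq_single ((t:ℕ) / y)]
    · rw [if_pos, mul_one]
      rw [← ht]
      exact (Nat.div_add_mod' (t:ℕ) y).symm
    · intro k hk hne
      rw [if_neg, mul_zero]
      intro h
      apply hne
      have : ((t:ℕ)) / y = k := by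
        rw [h, mul_comm, Nat.mul_add_div hy, Nat.div_eq_of_lt hm, add_zero]
      omega
    · intro hmem
      exfalso
      apply hmem
      rw [Finset.mem_range]
      exact (Nat.div_lt_iff_lt_mul hy).mpr (hd ▸ t.isLt)
  · rw [if_neg ht]
    rw [Finset.sum_eq_zero, mul_zero]
    intro k hk
    rw [if_neg, mul_zero]
    intro h
    apply ht
    rw [h, add_comm, Nat.add_mul_mod_self_right, Nat.mod_eq_of_lt hm]

lemma proj_psi_apply (d x y m s : ℕ) (hd : d = x * y) (hx : 0 < x) (hm : m < y)
    (i j : Fin d) :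
    proj (psi d x y m s) i j =
      if (i:ℕ) % y = m ∧ (j:ℕ) % y = m then
        ((x:ℂ))⁻¹ * ww x ^ ((s:ℤ) * (((i:ℕ)/y : ℕ) : ℤ) - (s:ℤ) * (((j:ℕ)/y : ℕ) : ℤ))
      else 0 := by
  rw [proj]
  rw [psi_apply d x y m s hd hm i, psi_apply d x y m s hd hm j]
  by_cases hi : (i:ℕ) % y = m
  · by_cases hj : (j:ℕ) % y = m
    · rw [if_pos hi, if_pos hj, if_pos ⟨hi, hj⟩]
      rw [map_mul, Complex.conj_ofReal, map_pow, conj_ww]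
      have hw := ww_ne_zero x
      have hC : ((1 / Real.sqrt x : ℝ) : ℂ) * ((1 / Real.sqrt x : ℝ) : ℂ) = ((x:ℂ))⁻¹ := by
        rw [← Complex.ofReal_mul]
        rw [show (1 / Real.sqrt x) * (1 / Real.sqrt x) = 1 / (Real.sqrt x * Real.sqrt x) by ring]
        rw [Real.mul_self_sqrt (Nat.cast_nonneg x)]
        push_cast
        rw [one_div]
      calc ((1 / Real.sqrt x : ℝ) : ℂ) * ww x ^ (s * ((i:ℕ)/y)) *
            (((1 / Real.sqrt x : ℝ) : ℂ) * ((ww x)⁻¹) ^ (s * ((j:ℕ)/y)))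
          = (((1 / Real.sqrt x : ℝ) : ℂ) * ((1 / Real.sqrt x : ℝ) : ℂ)) *
            (ww x ^ (s * ((i:ℕ)/y)) * ((ww x)⁻¹) ^ (s * ((j:ℕ)/y))) := by ring
        _ = ((x:ℂ))⁻¹ * ww x ^ ((s:ℤ) * (((i:ℕ)/y : ℕ) : ℤ) - (s:ℤ) * (((j:ℕ)/y : ℕ) : ℤ)) := by
            rw [hC]
            congr 1
            rw [inv_pow, ← zpow_natCast (ww x) (s * ((i:ℕ)/y)),
              ← zpow_natCast (ww x) (s * ((j:ℕ)/y)), ← zpow_neg,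
              ← zpow_add₀ hw]
            have h2 : ((s * ((i:ℕ)/y) :ℕ) : ℤ) + -((s * ((j:ℕ)/y):ℕ):ℤ)
                = (s:ℤ) * (((i:ℕ)/y : ℕ) : ℤ) - (s:ℤ) * (((j:ℕ)/y : ℕ) : ℤ) := by push_cast; ring
            rw [h2]
    · rw [if_neg hj, map_zero, mul_zero, if_neg (fun h => hj h.2)]
  · rw [if_neg hi, zero_mul, if_neg (fun h => hi h.1)]

/-- Lemma, general d: for d = xy = x̃ỹ with x = x̃p, ỹ = yp,
    ∑_{j ∈ Z_p} ψ_{m, s̃ + j·p^{r_{(1,x)}-1}M₁N₁} = ∑_{i ∈ Z_p} ψ_{m + i·p^{r_{(1,y)}}M₁N₁, s̃}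
    (as rank-one projections), where r₁ = v_p(d), r_{(1,x)} = v_p(x), r_{(1,y)} = r₁ - r_{(1,x)},
    M₁ = d/p^{r₁} and M₁N₁ ≡ 1 (mod p^{r₁}). -/
theorem kd_pure_digit_identity_general (d x y p r1 rx M1 N1 m st : ℕ)
    (hp : p.Prime) (hd : d = x * y) (hx : 0 < x) (hy : 0 < y)
    (hr1 : d = p ^ r1 * M1) (hM1 : ¬ p ∣ M1)
    (hrx : 1 ≤ rx) (hxdvd : p ^ rx ∣ x) (hxtop : ¬ p ∣ x / p ^ rx)
    (hN1 : M1 * N1 % p ^ r1 = 1 % p ^ r1)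
    (hm : m < y) (hst : st < x / p) :
    ∑ j ∈ Finset.range p,
        proj (psi d x y m ((st + j * (p ^ (rx - 1) * M1 * N1)) % x))
    = ∑ i ∈ Finset.range p,
        proj (psi d (x / p) (y * p) ((m + i * (p ^ (r1 - rx) * M1 * N1)) % (y * p)) st) := by
  classical
  haveI : Fact p.Prime := ⟨hp⟩
  have hp0 : p ≠ 0 := hp.pos.ne'
  have hp1 : 1 < p := hp.one_lt
  have hprxpos : 0 < p ^ rx := pow_pos hp.pos rx
  -- x = p^rx * u with p ∤ u
  obtain ⟨u, hxu⟩ : ∃ u, x = p ^ rx * u := ⟨x / p ^ rx, (Nat.mul_div_cancel' hxdvd).symm⟩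
  have hu' : x / p ^ rx = u := by rw [hxu, Nat.mul_div_cancel_left _ hprxpos]
  have hpu : ¬ p ∣ u := hu' ▸ hxtop
  have hu0 : u ≠ 0 := by rintro rfl; rw [mul_zero] at hxu; omega
  -- rx ≤ r1
  have hrxr1 : rx ≤ r1 := by
    by_contra hlt
    push_neg at hlt
    have h1 : p ^ (r1 + 1) ∣ p ^ r1 * M1 := by
      rw [← hr1, hd]
      exact dvd_trans (dvd_trans (pow_dvd_pow p hlt) hxdvd) (dvd_mul_right x y)
    obtain ⟨c, hc⟩ := h1
    rw [pow_succ] at hc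
    have hpr1 : 0 < p ^ r1 := pow_pos hp.pos r1
    exact hM1 ⟨c, Nat.eq_of_mul_eq_mul_left hpr1 (by rw [hc]; ring)⟩
  -- y = p^(r1-rx) * v with M1 = u * v, p ∤ v
  have hkey : u * y = p ^ (r1 - rx) * M1 := by
    have hpow : p ^ rx * p ^ (r1 - rx) = p ^ r1 := by
      rw [← pow_add]; congr 1; omega
    apply Nat.eq_of_mul_eq_mul_left hprxpos
    calc p ^ rx * (u * y) = x * y := by rw [hxu]; ring
      _ = p ^ r1 * M1 := by rw [← hd, hr1]
      _ = p ^ rx * (p ^ (r1 - rx) * M1) := by rw [← hpow]; ring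
  have hudvd : u ∣ M1 := by
    have cop : Nat.Coprime u (p ^ (r1 - rx)) :=
      Nat.Coprime.pow_right _ ((hp.coprime_iff_not_dvd.mpr hpu).symm)
    exact cop.dvd_of_dvd_mul_left ⟨y, hkey.symm⟩
  obtain ⟨v, hM1uv⟩ := hudvd
  have hyv : y = p ^ (r1 - rx) * v := by
    apply Nat.eq_of_mul_eq_mul_left (show 0 < u by omega)
    calc u * y = p ^ (r1 - rx) * M1 := hkey
      _ = u * (p ^ (r1 - rx) * v) := by rw [hM1uv]; ring
  have hpv : ¬ p ∣ v := fun hdv => hM1 (hM1uv ▸ hdv.mul_left u)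
  -- p ∤ N1
  have hr1pos : 1 ≤ r1 := le_trans hrx hrxr1
  have hppr1 : p ∣ p ^ r1 := dvd_pow_self p (by omega)
  have hpN1 : ¬ p ∣ N1 := by
    intro hdvd
    have hone : (1 : ℕ) % p ^ r1 = 1 := by
      apply Nat.mod_eq_of_lt
      calc 1 < p := hp1
        _ = p ^ 1 := (pow_one p).symm
        _ ≤ p ^ r1 := Nat.pow_le_pow_right hp.pos hr1pos
    have h2 : M1 * N1 % p ^ r1 = 1 := by rw [hN1, hone]
    have h3 := Nat.div_add_mod (M1 * N1) (p ^ r1)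
    rw [h2] at h3
    have h4 : p ∣ M1 * N1 := hdvd.mul_left M1
    have h5 : p ∣ p ^ r1 * (M1 * N1 / p ^ r1) := hppr1.mul_right _
    have h6 : p ∣ M1 * N1 - p ^ r1 * (M1 * N1 / p ^ r1) := Nat.dvd_sub h4 h5
    have h7 : M1 * N1 - p ^ r1 * (M1 * N1 / p ^ r1) = 1 := by omega
    rw [h7] at h6
    exact Nat.Prime.one_lt hp |>.ne' (Nat.dvd_one.mp h6)
  -- xt
  have hpowsplit : p ^ rx = p * p ^ (rx - 1) := by
    conv_lhs => rw [show rx = (rx - 1) + 1 by omega]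
    rw [pow_succ]; ring
  have hxt_eq : x / p = p ^ (rx - 1) * u := by
    rw [hxu, hpowsplit, mul_assoc, Nat.mul_div_cancel_left _ hp.pos]
  set xt := x / p with hxt
  have hxt0 : xt ≠ 0 := by
    rw [hxt_eq]
    exact Nat.mul_ne_zero (pow_pos hp.pos _).ne' hu0
  have hxtpos : 0 < xt := Nat.pos_of_ne_zero hxt0
  have hxxt : x = p * xt := by
    rw [hxt_eq, hxu, hpowsplit]; ring
  have he1 : p ^ (rx - 1) * M1 * N1 = xt * (v * N1) := by
    rw [hxt_eq, hM1uv]; ring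
  have hd' : d = xt * (y * p) := by rw [hd, hxxt]; ring
  have hyp0 : 0 < y * p := Nat.mul_pos hy hp.pos
  -- bound : m + c*y < y*p for c < p
  have hbound : ∀ c, c < p → m + c * y < y * p := by
    intro c hc
    have h2 : (c + 1) * y = c * y + y := by ring
    have h3 : (c + 1) * y ≤ p * y := Nat.mul_le_mul_right y (by omega)
    have h4 : y * p = p * y := mul_comm y p
    omega
  -- m_{i'} closed form
  set w := u * N1 with hw
  have he2 : p ^ (r1 - rx) * M1 * N1 = y * w := by
    rw [hw, hM1uv, hyv]; ring
  have hmi : ∀ i' : ℕ, (m + i' * (p ^ (r1 - rx) * M1 * N1)) % (y * p)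
      = m + ((i' * w) % p) * y := by
    intro i'
    rw [he2]
    have hdm := Nat.div_add_mod (i' * w) p
    have h1 : m + i' * (y * w) = (y * p) * ((i' * w) / p) + (m + ((i' * w) % p) * y) := by
      calc m + i' * (y * w) = m + (i' * w) * y := by ring
        _ = m + (p * ((i' * w) / p) + (i' * w) % p) * y := by rw [hdm]
        _ = _ := by ring
    rw [h1, Nat.mul_add_mod]
    exact Nat.mod_eq_of_lt (hbound _ (Nat.mod_lt _ hp.pos))
  -- t % (y*p) closed form when t % y = m
  have himod : ∀ t : ℕ, t % y = m → t % (y * p) = m + ((t / y) % p) * y := by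
    intro t htm
    have h1 := Nat.div_add_mod t y
    have h2 := Nat.div_add_mod (t / y) p
    have h3 : t = (y * p) * ((t / y) / p) + (m + ((t / y) % p) * y) := by
      calc t = y * (t / y) + m := by omega
        _ = y * (p * ((t / y) / p) + (t / y) % p) + m := by rw [h2]
        _ = _ := by ring
    conv_lhs => rw [h3]
    rw [Nat.mul_add_mod]
    exact Nat.mod_eq_of_lt (hbound _ (Nat.mod_lt _ hp.pos))
  -- entrywise
  ext i j
  simp only [Matrix.sum_apply]
  set a := (i : ℕ) / y with ha
  set b := (j : ℕ) / y with hb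
  set Δ : ℤ := (a : ℤ) - (b : ℤ) with hΔdef
  set e1 := p ^ (rx - 1) * M1 * N1 with he1def
  set z : ℂ := ww x ^ ((e1 : ℤ) * Δ) with hzdef
  have hwx := ww_ne_zero x
  have hLHS : ∀ j' ∈ Finset.range p,
      proj (psi d x y m ((st + j' * e1) % x)) i j
      = if (i : ℕ) % y = m ∧ (j : ℕ) % y = m then
          ((x : ℂ))⁻¹ * (ww x ^ ((st : ℤ) * Δ) * z ^ j')
        else 0 := by
    intro j' _
    rw [proj_psi_apply d x y m _ hd hx hm i j]
    split_ifs with hc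
    · rw [← ha, ← hb]
      congr 1
      set s' := (st + j' * e1) % x with hs'
      have hmodeq : ((s' : ℤ) * (a : ℤ) - (s' : ℤ) * (b : ℤ)) % (x : ℤ)
          = (((st + j' * e1 : ℕ) : ℤ) * Δ) % (x : ℤ) := by
        have hcast : (s' : ℤ) = ((st + j' * e1 : ℕ) : ℤ) % (x : ℤ) := by
          rw [hs']; push_cast; ring
        have h1 : ((s' : ℤ) * (a : ℤ) - (s' : ℤ) * (b : ℤ)) = (s' : ℤ) * Δ := by
          rw [hΔdef]; ring
        rw [h1, hcast, Int.mul_emod, Int.emod_emod_of_dvd _ dvd_rfl, ← Int.mul_emod]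
      rw [ww_zpow_mod x hx.ne' hmodeq]
      have hsplit : (((st + j' * e1 : ℕ) : ℤ) * Δ)
          = (st : ℤ) * Δ + ((e1 : ℤ) * Δ) * (j' : ℤ) := by push_cast; ring
      rw [hsplit, zpow_add₀ hwx]
      congr 1
      rw [zpow_mul (ww x) ((e1 : ℤ) * Δ) (j' : ℤ), zpow_natCast]
    · rfl
  have hRHS : ∀ i' ∈ Finset.range p,
      proj (psi d xt (y * p) ((m + i' * (p ^ (r1 - rx) * M1 * N1)) % (y * p)) st) i j
      = if (i : ℕ) % (y * p) = (m + i' * (p ^ (r1 - rx) * M1 * N1)) % (y * p)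
           ∧ (j : ℕ) % (y * p) = (m + i' * (p ^ (r1 - rx) * M1 * N1)) % (y * p) then
          ((xt : ℂ))⁻¹ * ww xt ^ ((st : ℤ) * (((i : ℕ) / (y * p) : ℕ) : ℤ)
            - (st : ℤ) * (((j : ℕ) / (y * p) : ℕ) : ℤ))
        else 0 :=
    fun i' _ => proj_psi_apply d xt (y * p) _ st hd' hxtpos (Nat.mod_lt _ hyp0) i j
  rw [Finset.sum_congr rfl hLHS, Finset.sum_congr rfl hRHS]
  have hmiy : ∀ i' : ℕ, ((m + i' * (p ^ (r1 - rx) * M1 * N1)) % (y * p)) % y = m := by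
    intro i'
    rw [hmi i', Nat.add_mul_mod_self_right, Nat.mod_eq_of_lt hm]
  by_cases hij : (i : ℕ) % y = m ∧ (j : ℕ) % y = m
  · obtain ⟨him, hjm⟩ := hij
    have hiy : (i : ℕ) % (y * p) = m + (a % p) * y := by
      have h := himod _ him; rw [← ha] at h; exact h
    have hjy : (j : ℕ) % (y * p) = m + (b % p) * y := by
      have h := himod _ hjm; rw [← hb] at h; exact h
    -- LHS closed form
    have hLs : (∑ j' ∈ Finset.range p,
        if (i : ℕ) % y = m ∧ (j : ℕ) % y = m then
          ((x : ℂ))⁻¹ * (ww x ^ ((st : ℤ) * Δ) * z ^ j') else 0)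
        = ((x : ℂ))⁻¹ * ww x ^ ((st : ℤ) * Δ) * ∑ j' ∈ Finset.range p, z ^ j' := by
      rw [Finset.mul_sum]
      refine Finset.sum_congr rfl fun j' _ => ?_
      rw [if_pos ⟨him, hjm⟩]; ring
    rw [hLs]
    -- z is a p-th root of unity
    have hprim : IsPrimitiveRoot (ww p) p := Complex.isPrimitiveRoot_exp p hp0
    have hzeta : ww x ^ (e1 : ℕ) = ww p ^ (v * N1) := by
      rw [he1, pow_mul]
      congr 1
      rw [show x = xt * p by rw [hxxt, mul_comm]]
      exact ww_mul_base xt p hxt0 hp0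
    have hzw : z = ww p ^ (((v * N1 : ℕ) : ℤ) * Δ) := by
      rw [hzdef, zpow_mul, zpow_natCast, hzeta, ← zpow_natCast (ww p) (v * N1), ← zpow_mul]
    have hpvN1 : ¬ p ∣ v * N1 := by
      rw [hp.dvd_mul]; tauto
    have hz1 : z = 1 ↔ (p : ℤ) ∣ Δ := by
      rw [hzw, hprim.zpow_eq_one_iff_dvd]
      constructor
      · intro hdvd
        have hpZ : Prime (p : ℤ) := Nat.prime_iff_prime_int.mp hp
        rcases hpZ.dvd_mul.mp hdvd with h | h
        · exact absurd (by exact_mod_cast h) hpvN1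
        · exact h
      · intro h; exact h.mul_left _
    have hzp : z ^ p = 1 := by
      rw [hzw, ← zpow_natCast, ← zpow_mul, hprim.zpow_eq_one_iff_dvd]
      exact ⟨((v * N1 : ℕ) : ℤ) * Δ, by ring⟩
    rw [geom_p z p hzp]
    by_cases hpΔ : (p : ℤ) ∣ Δ
    · -- matching digit case
      rw [if_pos (hz1.mpr hpΔ)]
      have hbj : b % p = a % p := by
        have h1 : Int.ModEq (p : ℤ) (b : ℤ) (a : ℤ) :=
          Int.modEq_iff_dvd.mpr (by rw [← hΔdef]; exact hpΔ)
        have h2 : ((b % p : ℕ) : ℤ) = ((a % p : ℕ) : ℤ) := by push_cast; exact h1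
        exact_mod_cast h2
      set c0 := a % p with hc0
      have hc0lt : c0 < p := Nat.mod_lt _ hp.pos
      have hpw : ¬ p ∣ w := by rw [hw, hp.dvd_mul]; tauto
      have hw0 : (w : ZMod p) ≠ 0 := by
        rw [Ne, ZMod.natCast_eq_zero_iff]
        exact hpw
      set i0 := (((c0 : ZMod p)) / (w : ZMod p)).val with hi0
      have hi0lt : i0 < p := ZMod.val_lt _
      have hsolve : ∀ i' : ℕ, i' < p → ((i' * w) % p = c0 ↔ i' = i0) := by
        intro i' hi'
        constructor
        · intro hmodc
          have hcastz : ((i' : ZMod p)) * (w : ZMod p) = (c0 : ZMod p) := by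
            have h := congrArg (fun n : ℕ => (n : ZMod p)) hmodc
            simpa [ZMod.natCast_mod, Nat.cast_mul] using h
          have h9 : (i' : ZMod p) = (c0 : ZMod p) / (w : ZMod p) := by
            field_simp at hcastz ⊢
            exact hcastz
          rw [hi0, ← h9, ZMod.val_cast_of_lt hi']
        · rintro rfl
          have h1 : ((i0 : ℕ) : ZMod p) = (c0 : ZMod p) / (w : ZMod p) := by
            rw [hi0]
            simp [ZMod.natCast_val, ZMod.cast_id]
          have h2 : ((i0 * w : ℕ) : ZMod p) = (c0 : ZMod p) := by
            push_cast
            rw [h1]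
            field_simp
          have h3 : (i0 * w) % p = c0 % p := by
            have h4 := congrArg ZMod.val h2
            rwa [ZMod.val_natCast, ZMod.val_natCast] at h4
          rw [h3, Nat.mod_eq_of_lt hc0lt]
      rw [Finset.sum_eq_single_of_mem i0 (Finset.mem_range.mpr hi0lt)]
      · rw [if_pos]
        swap
        · have h5 : (m + i0 * (p ^ (r1 - rx) * M1 * N1)) % (y * p) = m + c0 * y := by
            rw [hmi i0, (hsolve i0 hi0lt).mpr rfl]
          rw [h5, hiy, hjy, hbj]
          exact ⟨rfl, rfl⟩
        -- final computation
        have hdiv1 : ((i : ℕ) / (y * p) : ℕ) = a / p := by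
          rw [ha, Nat.div_div_eq_div_mul]
        have hdiv2 : ((j : ℕ) / (y * p) : ℕ) = b / p := by
          rw [hb, Nat.div_div_eq_div_mul]
        rw [hdiv1, hdiv2]
        set Δ' : ℤ := ((a / p : ℕ) : ℤ) - ((b / p : ℕ) : ℤ) with hΔ'
        have hda := Nat.div_add_mod a p
        have hdb := Nat.div_add_mod b p
        have hΔeq : Δ = (p : ℤ) * Δ' := by
          have h1 : (p : ℤ) * ((a / p : ℕ) : ℤ) + ((a % p : ℕ) : ℤ) = (a : ℤ) := by
            exact_mod_cast hda
          have h2 : (p : ℤ) * ((b / p : ℕ) : ℤ) + ((b % p : ℕ) : ℤ) = (b : ℤ) := by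
            exact_mod_cast hdb
          have h3 : ((a % p : ℕ) : ℤ) = ((b % p : ℕ) : ℤ) := by rw [hbj]
          rw [hΔdef, hΔ', mul_sub]
          linarith [h1, h2, h3]
        have hwxt : ww x ^ p = ww xt := by
          rw [hxxt]; exact ww_mul_base p xt hp0 hxt0
        have hexp : ww xt ^ ((st : ℤ) * ((a / p : ℕ) : ℤ) - (st : ℤ) * ((b / p : ℕ) : ℤ))
            = ww x ^ ((st : ℤ) * Δ) := by
          rw [show (st : ℤ) * ((a / p : ℕ) : ℤ) - (st : ℤ) * ((b / p : ℕ) : ℤ)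
              = (st : ℤ) * Δ' by rw [hΔ']; ring]
          rw [← hwxt, ← zpow_natCast (ww x) p, ← zpow_mul]
          congr 1
          rw [hΔeq]
          ring
        rw [hexp]
        have hxcast : (x : ℂ) = (p : ℂ) * (xt : ℂ) := by exact_mod_cast congrArg (fun n : ℕ => (n : ℂ)) hxxt
        have hpC : (p : ℂ) ≠ 0 := Nat.cast_ne_zero.mpr hp0
        have hxtC : (xt : ℂ) ≠ 0 := Nat.cast_ne_zero.mpr hxt0
        rw [hxcast]
        field_simp
      · intro i' hi'mem hne
        rw [if_neg]
        intro hcon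
        apply hne
        have h1 := hcon.1
        rw [hmi i', hiy] at h1
        have h2 : (i' * w) % p = c0 := by
          have h3 : ((i' * w) % p) * y = c0 * y := by omega
          exact Nat.eq_of_mul_eq_mul_right hy h3
        exact (hsolve i' (Finset.mem_range.mp hi'mem)).mp h2
    · -- digits don't match: both sides vanish
      rw [if_neg (fun h => hpΔ (hz1.mp h)), mul_zero]
      rw [Finset.sum_eq_zero]
      intro i' _
      rw [if_neg]
      intro hcon
      apply hpΔ
      have h1 := hcon.1
      have h2 := hcon.2
      rw [hmi i', hiy] at h1
      rw [hmi i', hjy] at h2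
      have h3 : a % p = b % p := by
        have h4 : (a % p) * y = (b % p) * y := by omega
        exact Nat.eq_of_mul_eq_mul_right hy h4
      have h5 : ((a : ℤ)) % (p : ℤ) = ((b : ℤ)) % (p : ℤ) := by
        have h6 : ((a % p : ℕ) : ℤ) = ((b % p : ℕ) : ℤ) := by exact_mod_cast h3
        push_cast at h6
        exact h6
      have h7 : Int.ModEq (p : ℤ) (a : ℤ) (b : ℤ) := h5
      have h8 := (Int.ModEq.dvd h7.symm)
      rw [hΔdef]
      exact h8
  · -- i or j not supported: both sides vanish
    rw [Finset.sum_eq_zero, Finset.sum_eq_zero]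
    · intro i' _
      rw [if_neg]
      intro hcon
      apply hij
      have hiy : (i : ℕ) % y = ((i : ℕ) % (y * p)) % y :=
        (Nat.mod_mod_of_dvd _ (dvd_mul_right y p)).symm
      have hjy : (j : ℕ) % y = ((j : ℕ) % (y * p)) % y :=
        (Nat.mod_mod_of_dvd _ (dvd_mul_right y p)).symm
      exact ⟨by rw [hiy, hcon.1, hmiy i'], by rw [hjy, hcon.2, hmiy i']⟩
    · intro j' _
      rw [if_neg hij]
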